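/- Let G be a (small) groupoid and let M ⊆ (Arr(G) × Arr(G)) × Arr(G) be the composition relation, M((a,b),c) ⇔ (a,b are composable and a ∘ b = c), and U ⊆ 1 × Arr(G) the relation picking out the identity arrows. Then (Arr(G), M, U) is a special dagger Frobenius monoid in Rel: M is associative with unit U, satisfies speciality M ∘ M° = id, and satisfies the Frobenius law (M × id) ∘ (id × M°) = (id × M) ∘ (M° × id) as relations. -/

import Mathlib

open CategoryTheory

/-- The total set of arrows of a groupoid. -/
def Arr (G : Type*) [Groupoid G] := Σ x y : G, x ⟶ y

/-- The composition relation of a groupoid, as a relation `(Arr G × Arr G) ⇸ Arr G`: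
`M a b c` iff `a` and `b` are composable and `a ∘ b = c`. -/
def GpdMul (G : Type*) [Groupoid G] : Arr G → Arr G → Arr G → Prop :=
  fun a b c => ∃ (x y z : G) (f : y ⟶ z) (g : x ⟶ y),
    a = ⟨y, z, f⟩ ∧ b = ⟨x, y, g⟩ ∧ c = ⟨x, z, g ≫ f⟩

/-- The relation `1 ⇸ Arr G` picking out identity arrows. -/
def GpdUnit (G : Type*) [Groupoid G] : Arr G → Prop :=
  fun a => ∃ x : G, a = ⟨x, x, 𝟙 x⟩

/-- For any groupoid `G`, the set of arrows with the composition relation and the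
unit relation forms a special dagger Frobenius monoid in `Rel`: associativity,
unitality, speciality and the Frobenius law hold (stated elementwise). -/
lemma arr_mk_inj {G : Type*} [Groupoid G] {x y x' y' : G} {f : x ⟶ y} {f' : x' ⟶ y'}
    (h : (⟨x, y, f⟩ : Arr G) = ⟨x', y', f'⟩) : x = x' ∧ y = y' ∧ HEq f f' := by
  cases h; exact ⟨rfl, rfl, HEq.rfl⟩

lemma mul_mk {G : Type*} [Groupoid G] {x y z : G} (f : y ⟶ z) (g : x ⟶ y) :
    GpdMul G ⟨y, z, f⟩ ⟨x, y, g⟩ ⟨x, z, g ≫ f⟩ :=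
  ⟨x, y, z, f, g, rfl, rfl, rfl⟩

theorem stmt1 (G : Type*) [Groupoid G] :
    (∀ a b c d : Arr G,
      (∃ e, GpdMul G a b e ∧ GpdMul G e c d) ↔ (∃ e, GpdMul G a e d ∧ GpdMul G b c e)) ∧
    (∀ a a' : Arr G, (∃ x, GpdUnit G x ∧ GpdMul G x a a') ↔ a = a') ∧
    (∀ a a' : Arr G, (∃ x, GpdUnit G x ∧ GpdMul G a x a') ↔ a = a') ∧
    (∀ a a' : Arr G, (∃ b c, GpdMul G b c a ∧ GpdMul G b c a') ↔ a = a') ∧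
    (∀ a b c d : Arr G,
      (∃ e, GpdMul G a e c ∧ GpdMul G e d b) ↔ (∃ e, GpdMul G c e a ∧ GpdMul G e b d)) := by
  refine ⟨?_, ?_, ?_, ?_, ?_⟩
  · -- associativity
    intro a b c d
    constructor
    · rintro ⟨e, ⟨x, y, z, f, g, rfl, rfl, rfl⟩, ⟨x2, y2, z2, f2, g2, he, rfl, rfl⟩⟩
      obtain ⟨rfl, rfl, hf⟩ := arr_mk_inj he
      obtain rfl := eq_of_heq hf
      exact ⟨⟨x2, y, g2 ≫ g⟩, by simpa using mul_mk f (g2 ≫ g), mul_mk g g2⟩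
    · rintro ⟨e, ⟨x, y, z, f, g, rfl, rfl, rfl⟩, ⟨x2, y2, z2, f2, g2, rfl, rfl, he⟩⟩
      obtain ⟨rfl, rfl, hf⟩ := arr_mk_inj he
      obtain rfl := eq_of_heq hf
      exact ⟨⟨y2, z, f2 ≫ f⟩, mul_mk f f2, by simpa using mul_mk (f2 ≫ f) g2⟩
  · -- left unit
    intro a a'
    constructor
    · rintro ⟨u, ⟨w, rfl⟩, ⟨x, y, z, f, g, he, rfl, rfl⟩⟩
      obtain ⟨rfl, rfl, hf⟩ := arr_mk_inj he
      obtain rfl := eq_of_heq hf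
      simp
      rfl
    · rintro rfl
      obtain ⟨x, y, f⟩ := a
      exact ⟨⟨y, y, 𝟙 y⟩, ⟨y, rfl⟩, by simpa using mul_mk (𝟙 y) f⟩
  · -- right unit
    intro a a'
    constructor
    · rintro ⟨u, ⟨w, rfl⟩, ⟨x, y, z, f, g, rfl, he, rfl⟩⟩
      obtain ⟨rfl, rfl, hf⟩ := arr_mk_inj he
      obtain rfl := eq_of_heq hf
      simp
      rfl
    · rintro rfl
      obtain ⟨x, y, f⟩ := a
      exact ⟨⟨x, x, 𝟙 x⟩, ⟨x, rfl⟩, by simpa using mul_mk f (𝟙 x)⟩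
  · -- speciality
    intro a a'
    constructor
    · rintro ⟨b, c, ⟨x, y, z, f, g, rfl, rfl, rfl⟩, ⟨x2, y2, z2, f2, g2, he1, he2, rfl⟩⟩
      obtain ⟨rfl, rfl, hf⟩ := arr_mk_inj he1
      obtain rfl := eq_of_heq hf
      obtain ⟨rfl, -, hg⟩ := arr_mk_inj he2
      obtain rfl := eq_of_heq hg
      rfl
    · rintro rfl
      obtain ⟨x, y, f⟩ := a
      exact ⟨⟨x, y, f⟩, ⟨x, x, 𝟙 x⟩, by simpa using mul_mk f (𝟙 x),
        by simpa using mul_mk f (𝟙 x)⟩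
  · -- Frobenius
    intro a b c d
    constructor
    · rintro ⟨e, ⟨x, y, z, f, g, rfl, rfl, rfl⟩, ⟨x2, y2, z2, f2, g2, he, rfl, rfl⟩⟩
      obtain ⟨rfl, rfl, hf⟩ := arr_mk_inj he
      obtain rfl := eq_of_heq hf
      refine ⟨⟨y, x, Groupoid.inv g⟩, ?_, ?_⟩
      · simpa using mul_mk (g ≫ f) (Groupoid.inv g)
      · simpa using mul_mk (Groupoid.inv g) (g2 ≫ g)
    · rintro ⟨e, ⟨x, y, z, f, g, rfl, rfl, rfl⟩, ⟨x2, y2, z2, f2, g2, he, rfl, rfl⟩⟩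
      obtain ⟨rfl, rfl, hf⟩ := arr_mk_inj he
      obtain rfl := eq_of_heq hf
      refine ⟨⟨y, x, Groupoid.inv g⟩, ?_, ?_⟩
      · simpa using mul_mk (g ≫ f) (Groupoid.inv g)
      · simpa using mul_mk (Groupoid.inv g) (g2 ≫ g)
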